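/- arXiv:2504.17215 — 3 statements merged into one kernel-verified Lean document; each statement's English description precedes it below -/
import Mathlib

section
/- Let f be L_f-smooth with ‖∇f‖ ≤ C_f everywhere and inf f = f̄ > −∞, let h ≥ 0 be L_h-smooth, and consider iterates z_{k+1} = z_k + γΔ_k, Δ_k = −∇f(z_k) − λ_k∇h(z_k), where λ_k ≥ 0 satisfies both complementary slackness λ_k(∇h(z_k)ᵀΔ_k + α‖∇h(z_k)‖²) = 0 and feasibility ∇h(z_k)ᵀΔ_k + α‖∇h(z_k)‖² ≤ 0. If 0 < γ ≤ min{α, 1/(L_f + αL_h)} and h(z₀) ≤ α²C₀, then for every K ≥ 1: (1/K)∑_{k=0}^{K−1} ‖Δ_k‖² ≤ 4(f(z₀) + α³C₀ − f̄)/(γK) + 2αC₀/(γL_hK) + 2α²L_hC_f². -/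
open scoped RealInnerProductSpace

section aux
variable {d : ℕ}
local notation "E" => EuclideanSpace ℝ (Fin d)

lemma line_deriv (f : E → ℝ) (f' : E → E)
    (hf : ∀ x, HasGradientAt f (f' x) x) (x v : E) (t : ℝ) :
    HasDerivAt (fun s : ℝ => f (x + s • v)) ⟪f' (x + t • v), v⟫ t := by
  have hc : HasDerivAt (fun s : ℝ => x + s • v) v t := by
    simpa using ((hasDerivAt_id t).smul_const v).const_add x
  have hg := (hf (x + t • v)).hasFDerivAt
  simpa [InnerProductSpace.toDual_apply_apply, Function.comp_def] using hg.comp_hasDerivAt t hc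

/-- Descent lemma. -/
lemma descent (f : E → ℝ) (f' : E → E) (L : ℝ) (hL : 0 ≤ L)
    (hf : ∀ x, HasGradientAt f (f' x) x)
    (hLip : ∀ x y, ‖f' x - f' y‖ ≤ L * ‖x - y‖) (x y : E) :
    f y ≤ f x + ⟪f' x, y - x⟫ + L / 2 * ‖y - x‖ ^ 2 := by
  set v := y - x with hv
  set ψ : ℝ → ℝ := fun t => f x + t * ⟪f' x, v⟫ + L / 2 * t ^ 2 * ‖v‖ ^ 2 - f (x + t • v)
    with hψ
  have hderiv : ∀ t : ℝ, HasDerivAt ψ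
      (⟪f' x, v⟫ + L * t * ‖v‖ ^ 2 - ⟪f' (x + t • v), v⟫) t := by
    intro t
    have h1 : HasDerivAt (fun t : ℝ => f x + t * ⟪f' x, v⟫ + L / 2 * t ^ 2 * ‖v‖ ^ 2)
        (⟪f' x, v⟫ + L * t * ‖v‖ ^ 2) t := by
      have : HasDerivAt (fun t : ℝ => f x + t * ⟪f' x, v⟫ + L / 2 * t ^ 2 * ‖v‖ ^ 2)
          (0 + 1 * ⟪f' x, v⟫ + L / 2 * (2 * t ^ 1) * ‖v‖ ^ 2) t := by
        exact (((hasDerivAt_const t (f x)).add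
          ((hasDerivAt_id t).mul_const _)).add
          (((hasDerivAt_pow 2 t).const_mul (L / 2)).mul_const _))
      convert this using 1; ring
    exact h1.sub (line_deriv f f' hf x v t)
  have hmono : MonotoneOn ψ (Set.Ici (0 : ℝ)) := by
    apply monotoneOn_of_deriv_nonneg (convex_Ici 0)
    · exact fun t _ => (hderiv t).continuousAt.continuousWithinAt
    · exact fun t _ => ((hderiv t).differentiableAt).differentiableWithinAt
    · intro t ht
      rw [interior_Ici] at ht
      rw [(hderiv t).deriv]
      have h2 : ⟪f' (x + t • v) - f' x, v⟫ ≤ L * t * ‖v‖ ^ 2 := by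
        calc ⟪f' (x + t • v) - f' x, v⟫ ≤ ‖f' (x + t • v) - f' x‖ * ‖v‖ :=
              real_inner_le_norm _ _
          _ ≤ (L * ‖(x + t • v) - x‖) * ‖v‖ :=
              mul_le_mul_of_nonneg_right (hLip _ _) (norm_nonneg _)
          _ = L * t * ‖v‖ ^ 2 := by
              have : ‖(x + t • v) - x‖ = t * ‖v‖ := by
                rw [show (x + t • v) - x = t • v by abel, norm_smul,
                  Real.norm_eq_abs, abs_of_pos ht]
              rw [this]; ring
      have h3 := inner_sub_left (𝕜 := ℝ) (f' (x + t • v)) (f' x) v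
      rw [h3] at h2
      linarith
  have h01 := hmono (Set.self_mem_Ici) (by norm_num : (1:ℝ) ∈ Set.Ici (0:ℝ)) zero_le_one
  have hy : x + (1:ℝ) • v = y := by simp [hv]
  have e0 : ψ 0 = 0 := by simp [hψ]
  have e1 : ψ 1 = f x + ⟪f' x, v⟫ + L / 2 * ‖v‖ ^ 2 - f y := by
    have : x + v = y := by rw [hv]; abel
    simp [hψ, this]
  rw [e0, e1] at h01
  linarith

/-- For a nonnegative L-smooth function, ‖∇h‖² ≤ 2 L h. -/
lemma gradsq (h : E → ℝ) (h' : E → E) (L : ℝ) (hLpos : 0 < L)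
    (hh : ∀ x, HasGradientAt h (h' x) x)
    (hLip : ∀ x y, ‖h' x - h' y‖ ≤ L * ‖x - y‖)
    (hnn : ∀ x, 0 ≤ h x) (x : E) :
    ‖h' x‖ ^ 2 ≤ 2 * L * h x := by
  have hd := descent h h' L hLpos.le hh hLip x (x - (1 / L) • h' x)
  have h1 : (x - (1/L) • h' x) - x = -((1/L) • h' x) := by abel
  rw [h1] at hd
  have h2 : ⟪h' x, -((1/L) • h' x)⟫ = -(1/L) * ‖h' x‖^2 := by
    rw [inner_neg_right, real_inner_smul_right, real_inner_self_eq_norm_sq]; ring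
  have h3 : ‖-((1/L) • h' x)‖^2 = (1/L)^2 * ‖h' x‖^2 := by
    rw [norm_neg, norm_smul, mul_pow, Real.norm_eq_abs, sq_abs]
  rw [h2, h3] at hd
  have h0 := hnn (x - (1 / L) • h' x)
  have hL' : L ≠ 0 := hLpos.ne'
  have e : h x + -(1 / L) * ‖h' x‖ ^ 2 + L / 2 * ((1 / L) ^ 2 * ‖h' x‖ ^ 2)
      = h x - (1/(2*L)) * ‖h' x‖^2 := by field_simp; ring
  rw [e] at hd
  have h4 : 1/(2*L) * ‖h' x‖^2 ≤ h x := by linarith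
  have h5 : ‖h' x‖^2 = (2*L) * (1/(2*L) * ‖h' x‖^2) := by field_simp
  rw [h5]
  exact mul_le_mul_of_nonneg_left h4 (by positivity)
end aux

set_option maxHeartbeats 1000000 in
/-- Theorem 1 (first bound): average squared norm of the search directions. -/
theorem stmt6 (d : ℕ) (f h : EuclideanSpace ℝ (Fin d) → ℝ)
    (f' h' : EuclideanSpace ℝ (Fin d) → EuclideanSpace ℝ (Fin d))
    (z Δ : ℕ → EuclideanSpace ℝ (Fin d)) (lam : ℕ → ℝ)
    (Lf Lh Cf C₀ α γ fbar : ℝ)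
    (hf : ∀ x, HasGradientAt f (f' x) x)
    (hLf : ∀ x y, ‖f' x - f' y‖ ≤ Lf * ‖x - y‖)
    (hCf : ∀ x, ‖f' x‖ ≤ Cf)
    (hbdd : BddBelow (Set.range f)) (hfbar : fbar = ⨅ x, f x)
    (hh : ∀ x, HasGradientAt h (h' x) x)
    (hLh : ∀ x y, ‖h' x - h' y‖ ≤ Lh * ‖x - y‖)
    (hhnn : ∀ x, 0 ≤ h x)
    (hLfpos : 0 < Lf) (hLhpos : 0 < Lh) (hα : 0 < α) (hC₀ : 0 < C₀)
    (hγ : 0 < γ) (hγα : γ ≤ α) (hγL : γ ≤ 1 / (Lf + α * Lh))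
    (hΔ : ∀ k, Δ k = -f' (z k) - lam k • h' (z k))
    (hz : ∀ k, z (k + 1) = z k + γ • Δ k)
    (hlamnn : ∀ k, 0 ≤ lam k)
    (hcs : ∀ k, lam k * (⟪h' (z k), Δ k⟫ + α * ‖h' (z k)‖ ^ 2) = 0)
    (hfeas : ∀ k, ⟪h' (z k), Δ k⟫ + α * ‖h' (z k)‖ ^ 2 ≤ 0)
    (hinit : h (z 0) ≤ α ^ 2 * C₀) :
    ∀ K : ℕ, 1 ≤ K →
      (1 / (K : ℝ)) * ∑ k ∈ Finset.range K, ‖Δ k‖ ^ 2 ≤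
        4 * (f (z 0) + α ^ 3 * C₀ - fbar) / (γ * K) + 2 * α * C₀ / (γ * Lh * K)
          + 2 * α ^ 2 * Lh * Cf ^ 2 := by
  intro K hK
  have hCf0 : 0 ≤ Cf := (norm_nonneg _).trans (hCf (z 0))
  have hγ1 : γ * (Lf + α * Lh) ≤ 1 := by
    have hpos : 0 < Lf + α * Lh := by positivity
    exact (le_div_iff₀ hpos).mp hγL
  set c : ℝ := 1 / (2 * Lh * α) with hc
  have hcpos : 0 < c := by rw [hc]; positivity
  have hcα : c * α = 1 / (2 * Lh) := by rw [hc]; field_simp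
  have hclh : c * Lh = 1 / (2 * α) := by rw [hc]; field_simp
  have key : ∀ k, γ/4 * ‖Δ k‖^2 ≤ (f (z k) - f (z (k+1)))
      + (α + c) * (h (z k) - h (z (k+1))) + γ/2 * α^2 * Lh * Cf^2 := by
    intro k
    have hx' : z (k+1) = z k + γ • Δ k := hz k
    have e1 : (z k + γ • Δ k) - z k = γ • Δ k := by abel
    have e3 : ‖γ • Δ k‖^2 = γ^2 * ‖Δ k‖^2 := by
      rw [norm_smul, mul_pow, Real.norm_eq_abs, sq_abs]
    -- descent on f
    have hA : f (z (k+1)) ≤ f (z k) + γ * ⟪f' (z k), Δ k⟫ + Lf/2 * (γ^2 * ‖Δ k‖^2) := by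
      have hd := descent f f' Lf hLfpos.le hf hLf (z k) (z k + γ • Δ k)
      rw [e1, real_inner_smul_right, e3] at hd
      rw [hx']
      linarith
    -- descent on h, with feasibility
    have hD : h (z (k+1)) ≤ h (z k) - γ * (α * ‖h' (z k)‖^2) + Lh/2 * (γ^2 * ‖Δ k‖^2) := by
      have hd := descent h h' Lh hLhpos.le hh hLh (z k) (z k + γ • Δ k)
      rw [e1, real_inner_smul_right, e3] at hd
      rw [hx']
      have hm := mul_le_mul_of_nonneg_left (hfeas k) hγ.le
      nlinarith [hd, hm]
    -- inner product of f' with Δ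
    have e : f' (z k) = -Δ k - lam k • h' (z k) := by rw [hΔ k]; abel
    have hB : ⟪f' (z k), Δ k⟫ = -‖Δ k‖^2 + lam k * (α * ‖h' (z k)‖^2) := by
      have hlam : lam k * ⟪h' (z k), Δ k⟫ = -(lam k * (α * ‖h' (z k)‖^2)) := by
        linear_combination hcs k
      calc ⟪f' (z k), Δ k⟫ = ⟪-Δ k - lam k • h' (z k), Δ k⟫ := by rw [← e]
        _ = -⟪Δ k, Δ k⟫ - lam k * ⟪h' (z k), Δ k⟫ := by
            rw [inner_sub_left, inner_neg_left, real_inner_smul_left]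
        _ = -‖Δ k‖^2 + lam k * (α * ‖h' (z k)‖^2) := by
            rw [real_inner_self_eq_norm_sq, hlam]; ring
    -- bound on the multiplier term
    have hC : lam k * (α * ‖h' (z k)‖^2) ≤ α^2 * ‖h' (z k)‖^2 + α * (Cf * ‖h' (z k)‖) := by
      rcases eq_or_lt_of_le (hlamnn k) with h0 | h0
      · rw [← h0, zero_mul]; positivity
      · have hip : ⟪h' (z k), Δ k⟫ + α * ‖h' (z k)‖^2 = 0 := by
          rcases mul_eq_zero.mp (hcs k) with hx | hx
          · exact absurd hx h0.ne'
          · exact hx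
        have e2 : ⟪h' (z k), Δ k⟫ = -⟪h' (z k), f' (z k)⟫ - lam k * ‖h' (z k)‖^2 := by
          rw [hΔ k, inner_sub_right, inner_neg_right, real_inner_smul_right,
            real_inner_self_eq_norm_sq]
        have hcs2 : lam k * ‖h' (z k)‖^2 = α * ‖h' (z k)‖^2 - ⟪h' (z k), f' (z k)⟫ := by
          linarith [hip, e2]
        have hCS : -(Cf * ‖h' (z k)‖) ≤ ⟪h' (z k), f' (z k)⟫ := by
          have h1 := abs_real_inner_le_norm (h' (z k)) (f' (z k))
          have h2 : ‖h' (z k)‖ * ‖f' (z k)‖ ≤ ‖h' (z k)‖ * Cf :=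
            mul_le_mul_of_nonneg_left (hCf _) (norm_nonneg _)
          have h3 := neg_abs_le (⟪h' (z k), f' (z k)⟫)
          linarith [h1, h2, h3]
        calc lam k * (α * ‖h' (z k)‖^2) = α * (lam k * ‖h' (z k)‖^2) := by ring
          _ = α * (α * ‖h' (z k)‖^2 - ⟪h' (z k), f' (z k)⟫) := by rw [hcs2]
          _ ≤ α * (α * ‖h' (z k)‖^2 + Cf * ‖h' (z k)‖) := by
              apply mul_le_mul_of_nonneg_left _ hα.le
              linarith [hCS]
          _ = α^2 * ‖h' (z k)‖^2 + α * (Cf * ‖h' (z k)‖) := by ring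
    -- Young's inequality step
    have hE : α * (Cf * ‖h' (z k)‖) ≤ α^2*Lh*Cf^2/2 + c * α * ‖h' (z k)‖^2 := by
      have h2L : (0:ℝ) < 2 * Lh := by positivity
      have h6 : 2 * Lh * (α * (Cf * ‖h' (z k)‖)) ≤ α^2*Lh^2*Cf^2 + ‖h' (z k)‖^2 := by
        nlinarith [sq_nonneg (α * Lh * Cf - ‖h' (z k)‖)]
      rw [hcα]
      have h7 : α^2*Lh*Cf^2/2 + 1/(2*Lh) * ‖h' (z k)‖^2
          = (α^2*Lh^2*Cf^2 + ‖h' (z k)‖^2)/(2*Lh) := by field_simp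
      rw [h7, le_div_iff₀ h2L]
      nlinarith [h6]
    -- combine
    have m0 : γ * ⟪f' (z k), Δ k⟫ = γ * (-‖Δ k‖^2 + lam k * (α * ‖h' (z k)‖^2)) := by
      rw [hB]
    have hCE : lam k * (α * ‖h' (z k)‖^2) ≤ α^2 * ‖h' (z k)‖^2
        + (α^2*Lh*Cf^2/2 + c * α * ‖h' (z k)‖^2) := by linarith [hC, hE]
    have m1 := mul_le_mul_of_nonneg_left hCE hγ.le
    have m2 := mul_le_mul_of_nonneg_left hD (by linarith : (0:ℝ) ≤ α + c)
    have hD2nn : (0:ℝ) ≤ ‖Δ k‖^2 := sq_nonneg _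
    have t1 : γ^2*(Lf + α*Lh) ≤ γ := by nlinarith [hγ1, hγ.le]
    have t2 : c*Lh*γ^2 ≤ γ/2 := by
      rw [hclh]
      have hγ2 : γ * γ ≤ γ * α := mul_le_mul_of_nonneg_left hγα hγ.le
      rw [div_mul_eq_mul_div, div_le_div_iff₀ (by positivity : (0:ℝ) < 2*α) (by norm_num : (0:ℝ) < 2)]
      nlinarith [hγ2]
    have hq1 : Lf/2*(γ^2*‖Δ k‖^2) + (α+c)*(Lh/2*(γ^2*‖Δ k‖^2)) ≤ 3*γ/4*‖Δ k‖^2 := by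
      nlinarith [mul_le_mul_of_nonneg_right t1 hD2nn, mul_le_mul_of_nonneg_right t2 hD2nn]
    linarith [hA, m0, m1, m2, hq1]
  -- summation and telescoping
  have tele_f : ∑ k ∈ Finset.range K, (f (z k) - f (z (k+1))) = f (z 0) - f (z K) :=
    Finset.sum_range_sub' (fun k => f (z k)) K
  have tele_h : ∑ k ∈ Finset.range K, (h (z k) - h (z (k+1))) = h (z 0) - h (z K) :=
    Finset.sum_range_sub' (fun k => h (z k)) K
  have hS : ∑ k ∈ Finset.range K, (γ/4 * ‖Δ k‖^2) ≤ (f (z 0) - f (z K))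
      + (α+c)*(h (z 0) - h (z K)) + K * (γ/2*α^2*Lh*Cf^2) := by
    calc ∑ k ∈ Finset.range K, (γ/4 * ‖Δ k‖^2)
        ≤ ∑ k ∈ Finset.range K, ((f (z k) - f (z (k+1)))
            + (α + c) * (h (z k) - h (z (k+1))) + γ/2 * α^2 * Lh * Cf^2) :=
          Finset.sum_le_sum (fun k _ => key k)
      _ = (f (z 0) - f (z K)) + (α+c)*(h (z 0) - h (z K)) + K * (γ/2*α^2*Lh*Cf^2) := by
          rw [Finset.sum_add_distrib, Finset.sum_add_distrib, ← Finset.mul_sum, tele_f, tele_h,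
            Finset.sum_const, Finset.card_range, nsmul_eq_mul]
  have hfK : fbar ≤ f (z K) := by rw [hfbar]; exact ciInf_le hbdd (z K)
  have hhK : 0 ≤ h (z K) := hhnn _
  have hsum' : γ/4 * ∑ k ∈ Finset.range K, ‖Δ k‖^2 ≤ (f (z 0) - fbar)
      + (α+c)*(α^2*C₀) + K * (γ/2*α^2*Lh*Cf^2) := by
    have hb : (α+c)*(h (z 0) - h (z K)) ≤ (α+c)*(α^2*C₀) :=
      mul_le_mul_of_nonneg_left (by linarith [hinit, hhK]) (by linarith)
    rw [Finset.mul_sum]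
    linarith [hS, hb]
  have hKpos : (0:ℝ) < K := by
    have : 0 < K := hK
    exact_mod_cast this
  have hS4 : ∑ k ∈ Finset.range K, ‖Δ k‖^2 ≤ 4/γ*(f (z 0) - fbar)
      + 4/γ*((α+c)*(α^2*C₀)) + K*(2*α^2*Lh*Cf^2) := by
    have hm := mul_le_mul_of_nonneg_left hsum' (by positivity : (0:ℝ) ≤ 4/γ)
    have e4 : (4/γ)*(γ/4 * ∑ k ∈ Finset.range K, ‖Δ k‖^2)
        = ∑ k ∈ Finset.range K, ‖Δ k‖^2 := by field_simp
    have e5 : (4/γ)*((f (z 0) - fbar) + (α+c)*(α^2*C₀) + K * (γ/2*α^2*Lh*Cf^2))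
        = 4/γ*(f (z 0) - fbar) + 4/γ*((α+c)*(α^2*C₀)) + K*(2*α^2*Lh*Cf^2) := by
      field_simp
      ring
    rw [e4, e5] at hm
    exact hm
  have hm2 := mul_le_mul_of_nonneg_left hS4 (by positivity : (0:ℝ) ≤ 1/(K:ℝ))
  refine hm2.trans_eq ?_
  rw [hc]
  field_simp
  ring
end

section
/- Under the same setting as the previous bound (f L_f-smooth with gradient bound C_f and infimum f̄, h ≥ 0 L_h-smooth, iterates z_{k+1} = z_k + γΔ_k with Δ_k = −∇f(z_k) − λ_k∇h(z_k), λ_k ≥ 0 satisfying complementary slackness and feasibility with parameter α, stepsize γ ≤ min{α, 1/(L_f + αL_h)}, and initialization h(z₀) ≤ α²C₀), for every K ≥ 1: (1/K)∑_{k=0}^{K−1} ‖∇h(z_k)‖² ≤ 2αC₀/(γK) + 2L_h(f(z₀) + α³C₀ − f̄)/(γK) + α²L_h²C_f². -/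
open scoped RealInnerProductSpace
set_option maxHeartbeats 1000000

lemma descent_aux {n : ℕ} (g : EuclideanSpace ℝ (Fin n) → ℝ)
    (g' : EuclideanSpace ℝ (Fin n) → EuclideanSpace ℝ (Fin n)) (L : ℝ) (hL : 0 ≤ L)
    (hg : ∀ x, HasGradientAt g (g' x) x)
    (hlip : ∀ x y, ‖g' x - g' y‖ ≤ L * ‖x - y‖) (x y : EuclideanSpace ℝ (Fin n)) :
    g y ≤ g x + ⟪g' x, y - x⟫ + L / 2 * ‖y - x‖ ^ 2 := by
  set v := y - x with hv
  have hcontg' : Continuous g' := by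
    have : LipschitzWith (Real.toNNReal L) g' := by
      apply LipschitzWith.of_dist_le_mul
      intro a b
      simpa [dist_eq_norm, Real.coe_toNNReal L hL] using hlip a b
    exact this.continuous
  have hline : ∀ t : ℝ, HasDerivAt (fun s : ℝ => x + s • v) v t := by
    intro t
    simpa using ((hasDerivAt_id t).smul_const v).const_add x
  have hderiv : ∀ t : ℝ, HasDerivAt (fun s : ℝ => g (x + s • v)) ⟪g' (x + t • v), v⟫ t := by
    intro t
    have h2 := (hg (x + t • v)).hasFDerivAt.comp_hasDerivAt t (hline t)
    simpa [Function.comp_def] using h2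
  have hcont : Continuous fun t : ℝ => ⟪g' (x + t • v), v⟫ := by
    exact (hcontg'.comp (by continuity)).inner continuous_const
  have hint : g (x + (1:ℝ) • v) - g (x + (0:ℝ) • v) =
      ∫ t in (0:ℝ)..1, ⟪g' (x + t • v), v⟫ := by
    exact (intervalIntegral.integral_eq_sub_of_hasDerivAt
      (fun t _ => hderiv t) (hcont.intervalIntegrable 0 1)).symm
  have hxy : x + (1:ℝ) • v = y := by simp [hv]
  have hx0 : x + (0:ℝ) • v = x := by simp
  have hbound : (∫ t in (0:ℝ)..1, ⟪g' (x + t • v), v⟫) ≤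
      ∫ t in (0:ℝ)..1, (⟪g' x, v⟫ + L * t * ‖v‖ ^ 2) := by
    apply intervalIntegral.integral_mono_on (by norm_num)
      (hcont.intervalIntegrable 0 1) ((by continuity : Continuous fun t : ℝ => ⟪g' x, v⟫ + L * t * ‖v‖^2).intervalIntegrable 0 1)
    intro t ht
    rcases ht with ⟨ht0, ht1⟩
    have : ⟪g' (x + t • v), v⟫ - ⟪g' x, v⟫ = ⟪g' (x + t • v) - g' x, v⟫ := by
      rw [inner_sub_left]
    have hcs : ⟪g' (x + t • v) - g' x, v⟫ ≤ ‖g' (x + t • v) - g' x‖ * ‖v‖ :=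
      real_inner_le_norm _ _
    have hl : ‖g' (x + t • v) - g' x‖ ≤ L * (t * ‖v‖) := by
      have := hlip (x + t • v) x
      simpa [norm_smul, abs_of_nonneg ht0] using this
    nlinarith [norm_nonneg v, mul_le_mul_of_nonneg_right hl (norm_nonneg v)]
  have hval : (∫ t in (0:ℝ)..1, (⟪g' x, v⟫ + L * t * ‖v‖ ^ 2)) =
      ⟪g' x, v⟫ + L / 2 * ‖v‖ ^ 2 := by
    have h1 : (fun t : ℝ => ⟪g' x, v⟫ + L * t * ‖v‖ ^ 2)
        = fun t : ℝ => ⟪g' x, v⟫ + (L * ‖v‖ ^ 2) * t := by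
      funext t; ring
    have h2 := intervalIntegral.integral_add (a := (0:ℝ)) (b := 1)
      (μ := MeasureTheory.volume) (f := fun _ : ℝ => ⟪g' x, v⟫)
      (g := fun t : ℝ => (L * ‖v‖ ^ 2) * t) intervalIntegrable_const
      (((continuous_const.mul continuous_id) : Continuous fun t : ℝ => (L * ‖v‖ ^ 2) * t).intervalIntegrable 0 1)
    rw [h1, h2, intervalIntegral.integral_const_mul,
      integral_id, intervalIntegral.integral_const]
    norm_num
    ring
  rw [hxy, hx0] at hint
  linarith [hint, hbound, hval.le, hval.ge]

/-- Theorem 1 (second bound): average squared gradient norm of the constraint function. -/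
theorem stmt7 (d : ℕ) (f h : EuclideanSpace ℝ (Fin d) → ℝ)
    (f' h' : EuclideanSpace ℝ (Fin d) → EuclideanSpace ℝ (Fin d))
    (z Δ : ℕ → EuclideanSpace ℝ (Fin d)) (lam : ℕ → ℝ)
    (Lf Lh Cf C₀ α γ fbar : ℝ)
    (hf : ∀ x, HasGradientAt f (f' x) x)
    (hLf : ∀ x y, ‖f' x - f' y‖ ≤ Lf * ‖x - y‖)
    (hCf : ∀ x, ‖f' x‖ ≤ Cf)
    (hbdd : BddBelow (Set.range f)) (hfbar : fbar = ⨅ x, f x)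
    (hh : ∀ x, HasGradientAt h (h' x) x)
    (hLh : ∀ x y, ‖h' x - h' y‖ ≤ Lh * ‖x - y‖)
    (hhnn : ∀ x, 0 ≤ h x)
    (hLfpos : 0 < Lf) (hLhpos : 0 < Lh) (hα : 0 < α) (hC₀ : 0 < C₀)
    (hγ : 0 < γ) (hγα : γ ≤ α) (hγL : γ ≤ 1 / (Lf + α * Lh))
    (hΔ : ∀ k, Δ k = -f' (z k) - lam k • h' (z k))
    (hz : ∀ k, z (k + 1) = z k + γ • Δ k)
    (hlamnn : ∀ k, 0 ≤ lam k)
    (hcs : ∀ k, lam k * (⟪h' (z k), Δ k⟫ + α * ‖h' (z k)‖ ^ 2) = 0)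
    (hfeas : ∀ k, ⟪h' (z k), Δ k⟫ + α * ‖h' (z k)‖ ^ 2 ≤ 0)
    (hinit : h (z 0) ≤ α ^ 2 * C₀) :
    ∀ K : ℕ, 1 ≤ K →
      (1 / (K : ℝ)) * ∑ k ∈ Finset.range K, ‖h' (z k)‖ ^ 2 ≤
        2 * α * C₀ / (γ * K) + 2 * Lh * (f (z 0) + α ^ 3 * C₀ - fbar) / (γ * K)
          + α ^ 2 * Lh ^ 2 * Cf ^ 2 := by
  intro K hK
  have hfbarle : ∀ x, fbar ≤ f x := fun x => hfbar ▸ ciInf_le hbdd x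
  have hγL' : γ * (Lf + α * Lh) ≤ 1 := by
    have hpos : 0 < Lf + α * Lh := by positivity
    rw [le_div_iff₀ hpos] at hγL; linarith
  have hdiff : ∀ k, z (k + 1) - z k = γ • Δ k := fun k => by rw [hz k]; abel
  have hnormstep : ∀ k, ‖z (k + 1) - z k‖ ^ 2 = γ ^ 2 * ‖Δ k‖ ^ 2 := by
    intro k
    rw [hdiff k, norm_smul, mul_pow, Real.norm_eq_abs, sq_abs]
  have hinnerstep : ∀ (w : EuclideanSpace ℝ (Fin d)) k,
      ⟪w, z (k + 1) - z k⟫ = γ * ⟪w, Δ k⟫ := fun w k => by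
    rw [hdiff k, real_inner_smul_right]
  have hstep_h : ∀ k, h (z (k + 1)) ≤
      h (z k) + γ * ⟪h' (z k), Δ k⟫ + Lh / 2 * (γ ^ 2 * ‖Δ k‖ ^ 2) := by
    intro k
    have := descent_aux h h' Lh hLhpos.le hh hLh (z k) (z (k + 1))
    rwa [hinnerstep, hnormstep] at this
  have hstep_f : ∀ k, f (z (k + 1)) ≤
      f (z k) + γ * ⟪f' (z k), Δ k⟫ + Lf / 2 * (γ ^ 2 * ‖Δ k‖ ^ 2) := by
    intro k
    have := descent_aux f f' Lf hLfpos.le hf hLf (z k) (z (k + 1))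
    rwa [hinnerstep, hnormstep] at this
  have hinnf : ∀ k, ⟪f' (z k), Δ k⟫ = -‖Δ k‖ ^ 2 - lam k * ⟪h' (z k), Δ k⟫ := by
    intro k
    have e : f' (z k) = -Δ k - lam k • h' (z k) := by rw [hΔ k]; module
    rw [e, inner_sub_left, inner_neg_left, real_inner_smul_left,
      real_inner_self_eq_norm_sq]
  have hlamA : ∀ k, lam k * ⟪h' (z k), Δ k⟫ = -(α * lam k * ‖h' (z k)‖ ^ 2) := by
    intro k
    linear_combination hcs k
  have hlamB : ∀ k, α * lam k * ‖h' (z k)‖ ^ 2 - α ^ 2 * ‖h' (z k)‖ ^ 2 ≤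
      α * Cf * ‖h' (z k)‖ := by
    intro k
    have hCfnn : 0 ≤ Cf := le_trans (norm_nonneg _) (hCf (z k))
    have hG : (0:ℝ) ≤ ‖h' (z k)‖ := norm_nonneg _
    rcases eq_or_lt_of_le (hlamnn k) with hl0 | hlpos
    · rw [← hl0]
      nlinarith [sq_nonneg ‖h' (z k)‖, mul_nonneg (mul_nonneg hα.le hCfnn) hG,
        mul_nonneg (mul_nonneg hα.le hα.le) (sq_nonneg ‖h' (z k)‖)]
    · have hz0 : ⟪h' (z k), Δ k⟫ + α * ‖h' (z k)‖ ^ 2 = 0 := by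
        rcases mul_eq_zero.mp (hcs k) with h0 | h0
        · exact absurd h0.symm (ne_of_lt hlpos)
        · exact h0
      have hinnh : ⟪h' (z k), Δ k⟫ =
          -⟪h' (z k), f' (z k)⟫ - lam k * ‖h' (z k)‖ ^ 2 := by
        rw [hΔ k, inner_sub_right, inner_neg_right, real_inner_smul_right,
          real_inner_self_eq_norm_sq]
      have heq : α * lam k * ‖h' (z k)‖ ^ 2 - α ^ 2 * ‖h' (z k)‖ ^ 2 =
          -(α * ⟪h' (z k), f' (z k)⟫) := by
        linear_combination α * hinnh - α * hz0
      rw [heq]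
      have habs := abs_real_inner_le_norm (h' (z k)) (f' (z k))
      have hprod : ‖h' (z k)‖ * ‖f' (z k)‖ ≤ ‖h' (z k)‖ * Cf :=
        mul_le_mul_of_nonneg_left (hCf (z k)) hG
      nlinarith [neg_abs_le (⟪h' (z k), f' (z k)⟫), le_abs_self (⟪h' (z k), f' (z k)⟫)]
  set Ψ : ℕ → ℝ :=
    fun k => 2 * h (z k) + 2 * Lh * α * (f (z k) + α * h (z k)) with hΨ
  have hCfnn : 0 ≤ Cf := le_trans (norm_nonneg _) (hCf (z 0))
  have hstep : ∀ k, α * γ * ‖h' (z k)‖ ^ 2 ≤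
      Ψ k - Ψ (k + 1) + α * γ * (α ^ 2 * Lh ^ 2 * Cf ^ 2) := by
    intro k
    have h1 := hstep_h k
    have h2 := hstep_f k
    have h3 := hfeas k
    have hB : ⟪f' (z k), Δ k⟫ = -‖Δ k‖ ^ 2 + α * lam k * ‖h' (z k)‖ ^ 2 := by
      rw [hinnf k]; linarith [hlamA k]
    have hD2 : (0:ℝ) ≤ ‖Δ k‖ ^ 2 := sq_nonneg _
    have hG : (0:ℝ) ≤ ‖h' (z k)‖ := norm_nonneg _
    have e1 : γ * α * ‖h' (z k)‖ ^ 2 - Lh / 2 * (γ ^ 2 * ‖Δ k‖ ^ 2) ≤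
        h (z k) - h (z (k + 1)) := by
      nlinarith [mul_le_mul_of_nonneg_left h3 hγ.le]
    have e2 : γ * ‖Δ k‖ ^ 2 - γ * (α * lam k * ‖h' (z k)‖ ^ 2)
        - Lf / 2 * (γ ^ 2 * ‖Δ k‖ ^ 2) ≤ f (z k) - f (z (k + 1)) := by
      rw [hB] at h2; nlinarith
    have hyoung : 2 * (α * Lh * Cf) * ‖h' (z k)‖ ≤
        ‖h' (z k)‖ ^ 2 + (α * Lh * Cf) ^ 2 := by
      nlinarith [sq_nonneg (‖h' (z k)‖ - α * Lh * Cf)]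
    simp only [hΨ]
    nlinarith [mul_le_mul_of_nonneg_left e1 (by positivity : (0:ℝ) ≤ 2 + 2 * Lh * α ^ 2),
      mul_le_mul_of_nonneg_left e2 (by positivity : (0:ℝ) ≤ 2 * Lh * α),
      mul_le_mul_of_nonneg_left (hlamB k) (by positivity : (0:ℝ) ≤ 2 * Lh * α * γ),
      mul_le_mul_of_nonneg_left hyoung (by positivity : (0:ℝ) ≤ α * γ),
      mul_nonneg (mul_nonneg (mul_nonneg hLhpos.le hγ.le) (sub_nonneg.2 hγα)) hD2,
      mul_nonneg (mul_nonneg (mul_nonneg (mul_nonneg hLhpos.le hγ.le) hα.le)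
        (sub_nonneg.2 hγL')) hD2]
  have hsum : ∀ n : ℕ, α * γ * ∑ k ∈ Finset.range n, ‖h' (z k)‖ ^ 2 ≤
      Ψ 0 - Ψ n + n * (α * γ * (α ^ 2 * Lh ^ 2 * Cf ^ 2)) := by
    intro n
    induction n with
    | zero => simp
    | succ m ih =>
      rw [Finset.sum_range_succ, mul_add]
      push_cast
      have := hstep m
      linarith
  have hΨ0 : Ψ 0 ≤ 2 * α ^ 2 * C₀ + 2 * Lh * α * (f (z 0) + α ^ 3 * C₀) := by
    simp only [hΨ]
    nlinarith [mul_le_mul_of_nonneg_left hinit (by positivity : (0:ℝ) ≤ 2 * Lh * α ^ 2)]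
  have hΨK : 2 * Lh * α * fbar ≤ Ψ K := by
    simp only [hΨ]
    nlinarith [mul_le_mul_of_nonneg_left (hfbarle (z K)) (by positivity : (0:ℝ) ≤ 2 * Lh * α),
      hhnn (z K), mul_nonneg (mul_nonneg hLhpos.le (sq_nonneg α)) (hhnn (z K))]
  have hK1 : (1:ℝ) ≤ (K:ℝ) := by exact_mod_cast hK
  have hK0 : (0:ℝ) < (K:ℝ) := lt_of_lt_of_le one_pos hK1
  have hγK : (0:ℝ) < γ * (K:ℝ) := by positivity
  set S : ℝ := ∑ k ∈ Finset.range K, ‖h' (z k)‖ ^ 2 with hS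
  have hmain : γ * S ≤ 2 * α * C₀ + 2 * Lh * (f (z 0) + α ^ 3 * C₀ - fbar)
      + (K:ℝ) * (γ * (α ^ 2 * Lh ^ 2 * Cf ^ 2)) := by
    have hsK := hsum K
    have hm : α * (γ * S) ≤ α * (2 * α * C₀ + 2 * Lh * (f (z 0) + α ^ 3 * C₀ - fbar)
        + (K:ℝ) * (γ * (α ^ 2 * Lh ^ 2 * Cf ^ 2))) := by nlinarith
    exact le_of_mul_le_mul_left hm hα
  have hrw : 2 * α * C₀ / (γ * K) + 2 * Lh * (f (z 0) + α ^ 3 * C₀ - fbar) / (γ * K)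
      + α ^ 2 * Lh ^ 2 * Cf ^ 2 =
      (2 * α * C₀ + 2 * Lh * (f (z 0) + α ^ 3 * C₀ - fbar)
        + (K:ℝ) * (γ * (α ^ 2 * Lh ^ 2 * Cf ^ 2))) / (γ * (K:ℝ)) := by
    field_simp
  have hrw2 : (1 / (K:ℝ)) * S = (γ * S) / (γ * (K:ℝ)) := by
    field_simp
  rw [hrw2, hrw]
  exact (div_le_div_iff_of_pos_right hγK).mpr hmain
end

section
/- Suppose (1/K)∑_{k=0}^{K−1}‖Δ_k‖² ≤ A/(γK) + α²B and (1/K)∑_{k=0}^{K−1}h(z_k) ≤ α²C₀ + γ²L_hB²(K−1)/4 for constants A, B, C₀, L_h > 0. If α = K^{−1/6} and γ = min{K^{−2/3}, 1/L_f} with L_f > 0, then both averages are O(K^{−1/3}); consequently, for any ε > 0 there exists t < K with max{h(z_t), ‖Δ_t‖²} ≤ ε once K = O(ε^{−3}). -/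
set_option maxHeartbeats 1000000 in
/-- Rate-extraction lemma formalizing Corollary 3 (no regularity assumption):
with `α = K^{-1/6}` and `γ = min{K^{-2/3}, 1/L_f}`, the Theorem-2-style average
bounds are `O(K^{-1/3})`, hence an ε-approximate iterate within `K = O(ε^{-3})`
iterations. Here, for the run with horizon `K`, `a K k = ‖Δ_k‖²` and
`hs K k = h(z_k)`. -/
theorem stmt19 (a hs : ℕ → ℕ → ℝ) (A B C₀ Lh Lf : ℝ)
    (hApos : 0 < A) (hBpos : 0 < B) (hC₀ : 0 < C₀) (hLh : 0 < Lh) (hLf : 0 < Lf)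
    (hann : ∀ K, ∀ k < K, 0 ≤ a K k) (hhnn : ∀ K, ∀ k < K, 0 ≤ hs K k)
    (hSa : ∀ K : ℕ, 1 ≤ K →
      (1 / (K : ℝ)) * ∑ k ∈ Finset.range K, a K k ≤
        A / (min ((K : ℝ) ^ (-(2 / 3 : ℝ))) (1 / Lf) * K) +
          ((K : ℝ) ^ (-(1 / 6 : ℝ))) ^ 2 * B)
    (hSh : ∀ K : ℕ, 1 ≤ K →
      (1 / (K : ℝ)) * ∑ k ∈ Finset.range K, hs K k ≤
        ((K : ℝ) ^ (-(1 / 6 : ℝ))) ^ 2 * C₀ +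
          (min ((K : ℝ) ^ (-(2 / 3 : ℝ))) (1 / Lf)) ^ 2 * Lh * B ^ 2 * ((K : ℝ) - 1) / 4) :
    ∃ C > 0, ∃ C' > 0,
      (∀ K : ℕ, 1 ≤ K →
        (1 / (K : ℝ)) * ∑ k ∈ Finset.range K, a K k ≤ C * (K : ℝ) ^ (-(1 / 3 : ℝ)) ∧
        (1 / (K : ℝ)) * ∑ k ∈ Finset.range K, hs K k ≤ C * (K : ℝ) ^ (-(1 / 3 : ℝ))) ∧
      (∀ ε > (0 : ℝ), ∀ K : ℕ, 1 ≤ K → (K : ℝ) ≥ C' / ε ^ 3 →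
        ∃ t < K, max (hs K t) (a K t) ≤ ε) := by
  set C : ℝ := A + A * Lf + B + C₀ + Lh * B ^ 2 / 4 with hCdef
  have hCpos : 0 < C := by positivity
  have key : ∀ K : ℕ, 1 ≤ K →
      (1 / (K : ℝ)) * ∑ k ∈ Finset.range K, a K k ≤ C * (K : ℝ) ^ (-(1 / 3 : ℝ)) ∧
      (1 / (K : ℝ)) * ∑ k ∈ Finset.range K, hs K k ≤ C * (K : ℝ) ^ (-(1 / 3 : ℝ)) := by
    intro K hK
    have hx1 : (1 : ℝ) ≤ (K : ℝ) := by exact_mod_cast hK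
    have hx0 : (0 : ℝ) < (K : ℝ) := lt_of_lt_of_le one_pos hx1
    set x : ℝ := (K : ℝ)
    have hp : (0 : ℝ) < x ^ (-(1 / 3 : ℝ)) := Real.rpow_pos_of_pos hx0 _
    have hsq : (x ^ (-(1 / 6 : ℝ))) ^ 2 = x ^ (-(1 / 3 : ℝ)) := by
      rw [← Real.rpow_natCast (x ^ (-(1 / 6 : ℝ))) 2, ← Real.rpow_mul hx0.le]
      norm_num
    set g : ℝ := min (x ^ (-(2 / 3 : ℝ))) (1 / Lf) with hgdef
    have hg0 : 0 < g := lt_min (Real.rpow_pos_of_pos hx0 _) (by positivity)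
    have hgle : g ≤ x ^ (-(2 / 3 : ℝ)) := min_le_left _ _
    -- bound for A / (g * x)
    have bound1 : A / (g * x) ≤ (A + A * Lf) * x ^ (-(1 / 3 : ℝ)) := by
      rcases min_cases (x ^ (-(2 / 3 : ℝ))) (1 / Lf) with ⟨hmin, _⟩ | ⟨hmin, _⟩
      · have e1 : x ^ (-(2 / 3 : ℝ)) * x = x ^ (1 / 3 : ℝ) := by
          nth_rewrite 2 [← Real.rpow_one x]
          rw [← Real.rpow_add hx0]
          norm_num
        have e2 : A / x ^ (1 / 3 : ℝ) = A * x ^ (-(1 / 3 : ℝ)) := by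
          rw [Real.rpow_neg hx0.le, div_eq_mul_inv]
        rw [hgdef, hmin, e1, e2]
        nlinarith [mul_pos (mul_pos hApos hLf) hp]
      · have e1 : A / (1 / Lf * x) = A * Lf * x ^ (-(1 : ℝ)) := by
          rw [Real.rpow_neg_one]
          field_simp
        have e2 : x ^ (-(1 : ℝ)) ≤ x ^ (-(1 / 3 : ℝ)) :=
          Real.rpow_le_rpow_of_exponent_le hx1 (by norm_num)
        rw [hgdef, hmin, e1]
        have h3 : A * Lf * x ^ (-(1 : ℝ)) ≤ A * Lf * x ^ (-(1 / 3 : ℝ)) := by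
          have := mul_pos hApos hLf
          nlinarith
        nlinarith [mul_pos hApos hp]
    -- bound for g^2 * Lh * B^2 * (x-1) / 4
    have bound2 : g ^ 2 * Lh * B ^ 2 * (x - 1) / 4 ≤ Lh * B ^ 2 / 4 * x ^ (-(1 / 3 : ℝ)) := by
      have e1 : (x ^ (-(2 / 3 : ℝ))) ^ 2 * x = x ^ (-(1 / 3 : ℝ)) := by
        rw [← Real.rpow_natCast (x ^ (-(2 / 3 : ℝ))) 2, ← Real.rpow_mul hx0.le]
        nth_rewrite 2 [← Real.rpow_one x]
        rw [← Real.rpow_add hx0]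
        norm_num
      have hgsq : g ^ 2 ≤ (x ^ (-(2 / 3 : ℝ))) ^ 2 := by
        apply pow_le_pow_left₀ hg0.le hgle
      have hx' : x - 1 ≤ x := by linarith
      have hx'' : 0 ≤ x - 1 := by linarith
      have hmul : g ^ 2 * (x - 1) ≤ (x ^ (-(2 / 3 : ℝ))) ^ 2 * x :=
        mul_le_mul hgsq hx' hx'' (by positivity)
      rw [← e1]
      nlinarith [mul_pos hLh (pow_pos hBpos 2)]
    constructor
    · calc (1 / x) * ∑ k ∈ Finset.range K, a K k
          ≤ A / (g * x) + (x ^ (-(1 / 6 : ℝ))) ^ 2 * B := hSa K hK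
        _ ≤ (A + A * Lf) * x ^ (-(1 / 3 : ℝ)) + x ^ (-(1 / 3 : ℝ)) * B := by
            rw [hsq]; linarith
        _ ≤ C * x ^ (-(1 / 3 : ℝ)) := by
            have hid : (A + A * Lf) * x ^ (-(1 / 3 : ℝ)) + x ^ (-(1 / 3 : ℝ)) * B
                + (C₀ + Lh * B ^ 2 / 4) * x ^ (-(1 / 3 : ℝ)) = C * x ^ (-(1 / 3 : ℝ)) := by
              rw [hCdef]; ring
            have hpos : 0 ≤ (C₀ + Lh * B ^ 2 / 4) * x ^ (-(1 / 3 : ℝ)) := by positivity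
            linarith
    · calc (1 / x) * ∑ k ∈ Finset.range K, hs K k
          ≤ (x ^ (-(1 / 6 : ℝ))) ^ 2 * C₀ + g ^ 2 * Lh * B ^ 2 * (x - 1) / 4 := hSh K hK
        _ ≤ x ^ (-(1 / 3 : ℝ)) * C₀ + Lh * B ^ 2 / 4 * x ^ (-(1 / 3 : ℝ)) := by
            rw [hsq]; linarith
        _ ≤ C * x ^ (-(1 / 3 : ℝ)) := by
            have hid : x ^ (-(1 / 3 : ℝ)) * C₀ + Lh * B ^ 2 / 4 * x ^ (-(1 / 3 : ℝ))
                + (A + A * Lf + B) * x ^ (-(1 / 3 : ℝ)) = C * x ^ (-(1 / 3 : ℝ)) := by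
              rw [hCdef]; ring
            have hpos : 0 ≤ (A + A * Lf + B) * x ^ (-(1 / 3 : ℝ)) := by positivity
            linarith
  refine ⟨C, hCpos, 8 * C ^ 3, by positivity, key, ?_⟩
  intro ε hε K hK hKge
  have hx1 : (1 : ℝ) ≤ (K : ℝ) := by exact_mod_cast hK
  have hx0 : (0 : ℝ) < (K : ℝ) := lt_of_lt_of_le one_pos hx1
  set x : ℝ := (K : ℝ)
  have hcube : (2 * C / ε) ^ 3 ≤ x := by
    have : (2 * C / ε) ^ 3 = 8 * C ^ 3 / ε ^ 3 := by ring
    rw [this]; exact hKge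
  have h13 : 2 * C / ε ≤ x ^ (1 / 3 : ℝ) := by
    have h := Real.rpow_le_rpow (by positivity) hcube (by norm_num : (0:ℝ) ≤ 1 / 3)
    rwa [← Real.rpow_natCast (2 * C / ε) 3, ← Real.rpow_mul (by positivity),
      (by norm_num : ((3 : ℕ) : ℝ) * (1 / 3) = 1), Real.rpow_one] at h
  have hx13 : (0 : ℝ) < x ^ (1 / 3 : ℝ) := Real.rpow_pos_of_pos hx0 _
  have hmain : 2 * C * x ^ (-(1 / 3 : ℝ)) ≤ ε := by
    rw [Real.rpow_neg hx0.le, ← div_eq_mul_inv, div_le_iff₀ hx13]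
    rw [div_le_iff₀ hε] at h13
    linarith [mul_le_mul_of_nonneg_left h13 hε.le]
  obtain ⟨ha, hh⟩ := key K hK
  have hsum : ∑ k ∈ Finset.range K, (hs K k + a K k) ≤ ∑ k ∈ Finset.range K, ε := by
    rw [Finset.sum_add_distrib, Finset.sum_const, Finset.card_range, nsmul_eq_mul]
    have havg : (1 / x) * (∑ k ∈ Finset.range K, hs K k + ∑ k ∈ Finset.range K, a K k) ≤ ε := by
      rw [mul_add]
      calc (1 / x) * ∑ k ∈ Finset.range K, hs K k + (1 / x) * ∑ k ∈ Finset.range K, a K k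
          ≤ C * x ^ (-(1 / 3 : ℝ)) + C * x ^ (-(1 / 3 : ℝ)) := add_le_add hh ha
        _ = 2 * C * x ^ (-(1 / 3 : ℝ)) := by ring
        _ ≤ ε := hmain
    have := mul_le_mul_of_nonneg_left havg hx0.le
    rw [← mul_assoc, mul_one_div, div_self hx0.ne', one_mul] at this
    linarith
  obtain ⟨t, htmem, hle⟩ := Finset.exists_le_of_sum_le
    (Finset.nonempty_range_iff.mpr (by omega)) hsum
  have ht : t < K := Finset.mem_range.mp htmem
  refine ⟨t, ht, ?_⟩
  have h1 := hann K t ht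
  have h2 := hhnn K t ht
  exact max_le (by linarith) (by linarith)
end
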